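/- Suppose U is concave and continuous on the space of a-variables. Then the value function Φ_U is concave on the nonnegative orthant of capacity matrices: for all C, C' with C(i,j) ≥ 0 and C'(i,j) ≥ 0 for all i,j, and all θ ∈ [0,1], one has Φ_U(θ·C + (1−θ)·C') ≥ θ·Φ_U(C) + (1−θ)·Φ_U(C'). -/
import Mathlib


open Finset

noncomputable section

/-- Net outflow of commodity `k` at node `i` for flow `r`. -/
def mcfOut {N : ℕ} (A : Finset (Fin N)) (r : Fin N → Fin N → A → ℝ) (k : A) (i : Fin N) : ℝ :=
  (∑ j, r i j k) - (∑ j, r j i k)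

/-- Feasible set of the multi-commodity flow problem with capacity matrix `C`. -/
def mcfFeas {N : ℕ} (A : Finset (Fin N)) (S : A → Finset A) (C : Fin N → Fin N → ℝ) :
    Set ((Fin N → Fin N → A → ℝ) × (A → A → ℝ)) :=
  { p | (∀ i j k, 0 ≤ p.1 i j k ∧ p.1 i j k ≤ 1) ∧
        (∀ i k, 0 ≤ p.2 i k) ∧
        (∀ (k : A) (i : A), i ∈ S k → p.2 i k ≤ mcfOut A p.1 k i) ∧
        (∀ (k : A) (i : Fin N), i ∉ A → mcfOut A p.1 k i = 0) ∧
        (∀ i j, ∑ k, p.1 i j k ≤ C i j) }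

/-- Value function `Φ_U(C)` of the multi-commodity flow problem. -/
def mcfValue {N : ℕ} (A : Finset (Fin N)) (S : A → Finset A)
    (U : (A → A → ℝ) → ℝ) (C : Fin N → Fin N → ℝ) : ℝ :=
  sSup ((fun p => U p.2) '' mcfFeas A S C)

namespace McfAux

variable {N : ℕ} (A : Finset (Fin N)) (S : A → Finset A)

/-- Box containing all `a`-values of feasible points. -/
def box : Set (A → A → ℝ) :=
  {a | ∀ i k, 0 ≤ a i k ∧ (i ∈ S k → a i k ≤ N)}

/-- Points with source coordinates zero; feasible with zero flow for any nonneg capacity. -/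
def zbox : Set (A → A → ℝ) :=
  {a | ∀ i k, 0 ≤ a i k ∧ (i ∈ S k → a i k = 0)}

variable {A S}

lemma out_combo (r r' : Fin N → Fin N → A → ℝ) (θ : ℝ) (k : A) (i : Fin N) :
    mcfOut A (fun i j k => θ * r i j k + (1 - θ) * r' i j k) k i
      = θ * mcfOut A r k i + (1 - θ) * mcfOut A r' k i := by
  simp only [mcfOut, Finset.sum_add_distrib, ← Finset.mul_sum]
  ring

lemma out_le_N {r : Fin N → Fin N → A → ℝ} (hr : ∀ i j k, 0 ≤ r i j k ∧ r i j k ≤ 1)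
    (k : A) (i : Fin N) : mcfOut A r k i ≤ N := by
  have h1 : (∑ j, r i j k) ≤ ∑ _j : Fin N, (1 : ℝ) :=
    Finset.sum_le_sum fun j _ => (hr i j k).2
  have h2 : (0 : ℝ) ≤ ∑ j, r j i k :=
    Finset.sum_nonneg fun j _ => (hr j i k).1
  have : (∑ _j : Fin N, (1 : ℝ)) = N := by simp
  simp only [mcfOut]
  linarith

lemma zbox_mem_feas {D : Fin N → Fin N → ℝ} (hD : ∀ i j, 0 ≤ D i j)
    {a : A → A → ℝ} (ha : a ∈ zbox A S) :
    ((fun _ _ _ => 0, a) : (Fin N → Fin N → A → ℝ) × (A → A → ℝ)) ∈ mcfFeas A S D := by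
  have hout : ∀ (k : A) (i : Fin N),
      mcfOut A (fun _ _ _ => (0:ℝ)) k i = 0 := by intro k i; simp [mcfOut]
  refine ⟨fun i j k => by norm_num, fun i k => (ha i k).1, ?_, fun k i _ => hout k i, ?_⟩
  · intro k i hi
    rw [hout]
    exact le_of_eq ((ha i k).2 hi)
  · intro i j
    simpa using hD i j

lemma img_subset_box (U : (A → A → ℝ) → ℝ) (D : Fin N → Fin N → ℝ) :
    (fun p => U p.2) '' mcfFeas A S D ⊆ U '' box A S := by
  rintro x ⟨p, hp, rfl⟩
  refine ⟨p.2, fun i k => ⟨hp.2.1 i k, fun hik => ?_⟩, rfl⟩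
  exact le_trans (hp.2.2.1 k i hik) (out_le_N hp.1 k _)

lemma zbox_subset_box : zbox A S ⊆ box A S := by
  intro a ha i k
  exact ⟨(ha i k).1, fun h => by rw [(ha i k).2 h]; positivity⟩

/-- If `U` is unbounded above on the big box, it is unbounded above on the zero-box. -/
lemma unbdd_transfer_box {U : (A → A → ℝ) → ℝ}
    (hUconc : ConcaveOn ℝ Set.univ U) (hUcont : Continuous U)
    (h : BddAbove (U '' zbox A S)) : BddAbove (U '' box A S) := by
  obtain ⟨M, hM⟩ := h
  set K2 : Set (A → A → ℝ) :=
    Set.univ.pi fun _ : A => Set.univ.pi fun _ : A => Set.Icc (-(N:ℝ)) 0 with hK2def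
  have hK2 : IsCompact K2 :=
    isCompact_univ_pi fun _ => isCompact_univ_pi fun _ => isCompact_Icc
  obtain ⟨m2, hm2⟩ := (hK2.image hUcont).bddBelow
  refine ⟨2 * M - m2, ?_⟩
  rintro x ⟨a, ha, rfl⟩
  set ww : A → A → ℝ := fun i k => if i ∈ S k then -(a i k) else 0 with hwwdef
  set zz : A → A → ℝ := fun i k => if i ∈ S k then 0 else a i k / 2 with hzzdef
  have hcomb : (1/2 : ℝ) • a + (1/2 : ℝ) • ww = zz := by
    funext i k
    simp only [Pi.add_apply, Pi.smul_apply, smul_eq_mul, hwwdef, hzzdef]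
    split_ifs <;> ring
  have hU := hUconc.2 (Set.mem_univ a) (Set.mem_univ ww)
    (show (0:ℝ) ≤ 1/2 by norm_num) (show (0:ℝ) ≤ 1/2 by norm_num)
    (show (1:ℝ)/2 + 1/2 = 1 by norm_num)
  rw [hcomb] at hU
  have hww : m2 ≤ U ww := by
    refine hm2 ⟨ww, ?_, rfl⟩
    intro i _
    intro k _
    simp only [hwwdef]
    split_ifs with h
    · exact ⟨by linarith [(ha i k).2 h], by linarith [(ha i k).1]⟩
    · exact ⟨neg_nonpos.mpr (Nat.cast_nonneg N), le_refl 0⟩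
  have hzz : U zz ≤ M := by
    refine hM ⟨zz, ?_, rfl⟩
    intro i k
    simp only [hzzdef]
    split_ifs with h
    · exact ⟨le_refl _, fun _ => rfl⟩
    · exact ⟨by linarith [(ha i k).1], fun h' => absurd h' h⟩
  simp only [smul_eq_mul] at hU
  linarith

lemma unbdd_transfer {U : (A → A → ℝ) → ℝ}
    (hUconc : ConcaveOn ℝ Set.univ U) (hUcont : Continuous U)
    {D D' : Fin N → Fin N → ℝ} (hD' : ∀ i j, 0 ≤ D' i j)
    (h : ¬ BddAbove ((fun p => U p.2) '' mcfFeas A S D)) :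
    ¬ BddAbove ((fun p => U p.2) '' mcfFeas A S D') := by
  intro h'
  have hbox : ¬ BddAbove (U '' box A S) :=
    fun hb => h (hb.mono (img_subset_box U D))
  have hz : ¬ BddAbove (U '' zbox A S) :=
    fun hb => hbox (unbdd_transfer_box hUconc hUcont hb)
  apply hz
  refine h'.mono ?_
  rintro x ⟨a, ha, rfl⟩
  exact ⟨((fun _ _ _ => 0, a)), zbox_mem_feas hD' ha, rfl⟩

lemma mix_mem {C C' : Fin N → Fin N → ℝ} {θ : ℝ} (hθ0 : 0 ≤ θ) (hθ1 : θ ≤ 1)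
    {p q : (Fin N → Fin N → A → ℝ) × (A → A → ℝ)}
    (hp : p ∈ mcfFeas A S C) (hq : q ∈ mcfFeas A S C') :
    ((fun i j k => θ * p.1 i j k + (1 - θ) * q.1 i j k,
      fun i k => θ * p.2 i k + (1 - θ) * q.2 i k) :
      (Fin N → Fin N → A → ℝ) × (A → A → ℝ)) ∈
      mcfFeas A S (fun i j => θ * C i j + (1 - θ) * C' i j) := by
  obtain ⟨hp1, hp2, hp3, hp4, hp5⟩ := hp
  obtain ⟨hq1, hq2, hq3, hq4, hq5⟩ := hq
  refine ⟨?_, ?_, ?_, ?_, ?_⟩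
  · intro i j k
    obtain ⟨h1, h2⟩ := hp1 i j k
    obtain ⟨h3, h4⟩ := hq1 i j k
    constructor
    · show (0:ℝ) ≤ θ * p.1 i j k + (1 - θ) * q.1 i j k
      nlinarith
    · show θ * p.1 i j k + (1 - θ) * q.1 i j k ≤ 1
      nlinarith
  · intro i k
    have h1 := hp2 i k
    have h2 := hq2 i k
    show (0:ℝ) ≤ θ * p.2 i k + (1 - θ) * q.2 i k
    nlinarith
  · intro k i hi
    have h1 := hp3 k i hi
    have h2 := hq3 k i hi
    rw [out_combo]
    show θ * p.2 i k + (1 - θ) * q.2 i k ≤ θ * mcfOut A p.1 k ↑i + (1 - θ) * mcfOut A q.1 k ↑i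
    nlinarith
  · intro k i hi
    rw [out_combo, hp4 k i hi, hq4 k i hi]
    ring
  · intro i j
    have h1 := hp5 i j
    have h2 := hq5 i j
    calc (∑ k, (θ * p.1 i j k + (1 - θ) * q.1 i j k))
        = θ * (∑ k, p.1 i j k) + (1 - θ) * (∑ k, q.1 i j k) := by
          rw [Finset.sum_add_distrib, Finset.mul_sum, Finset.mul_sum]
      _ ≤ θ * C i j + (1 - θ) * C' i j := by nlinarith

end McfAux

/-- If `U` is concave and continuous, then the value function `Φ_U` is concave on
the nonnegative orthant of capacity matrices. -/
theorem mcfValue_concave {N K : ℕ} (hN : 0 < N) (hK : 0 < K)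
    (A : Finset (Fin N)) (hA : A.card = K)
    (S : A → Finset A) (hS : ∀ k, (S k).Nonempty)
    (U : (A → A → ℝ) → ℝ) (hUconc : ConcaveOn ℝ Set.univ U) (hUcont : Continuous U)
    (C C' : Fin N → Fin N → ℝ) (hC : ∀ i j, 0 ≤ C i j) (hC' : ∀ i j, 0 ≤ C' i j)
    (θ : ℝ) (hθ0 : 0 ≤ θ) (hθ1 : θ ≤ 1) :
    θ * mcfValue A S U C + (1 - θ) * mcfValue A S U C' ≤
      mcfValue A S U (fun i j => θ * C i j + (1 - θ) * C' i j) := by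
  classical
  set Cm : Fin N → Fin N → ℝ := fun i j => θ * C i j + (1 - θ) * C' i j with hCmdef
  have hCm : ∀ i j, 0 ≤ Cm i j := fun i j => by
    have := hC i j; have := hC' i j; simp only [hCmdef]; nlinarith
  set T := (fun p => U p.2) '' mcfFeas A S Cm with hTdef
  set S1 := (fun p => U p.2) '' mcfFeas A S C with hS1def
  set S2 := (fun p => U p.2) '' mcfFeas A S C' with hS2def
  have hval : mcfValue A S U C = sSup S1 := rfl
  have hval' : mcfValue A S U C' = sSup S2 := rfl
  have hvalm : mcfValue A S U Cm = sSup T := rfl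
  -- zero point feasibility
  have hz0 : (fun _ _ => (0:ℝ)) ∈ McfAux.zbox A S := fun i k => ⟨le_refl _, fun _ => rfl⟩
  have hzC : U (fun _ _ => 0) ∈ S1 :=
    ⟨_, McfAux.zbox_mem_feas hC hz0, rfl⟩
  have hzC' : U (fun _ _ => 0) ∈ S2 :=
    ⟨_, McfAux.zbox_mem_feas hC' hz0, rfl⟩
  have hne1 : S1.Nonempty := ⟨_, hzC⟩
  have hne2 : S2.Nonempty := ⟨_, hzC'⟩
  by_cases hTb : BddAbove T
  · -- bounded case
    have hS1b : BddAbove S1 := by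
      by_contra h
      exact McfAux.unbdd_transfer hUconc hUcont hCm h hTb
    have hS2b : BddAbove S2 := by
      by_contra h
      exact McfAux.unbdd_transfer hUconc hUcont hCm h hTb
    rw [hval, hval', hvalm]
    refine le_of_forall_pos_le_add ?_
    intro ε hε
    have hx : ∃ x ∈ S1, θ * sSup S1 ≤ θ * x + ε / 2 := by
      rcases eq_or_lt_of_le hθ0 with h | h
      · exact ⟨_, hzC, by rw [← h]; linarith⟩
      · obtain ⟨x, hxm, hxl⟩ :=
          exists_lt_of_lt_csSup hne1 (by linarith : sSup S1 - ε / 2 < sSup S1)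
        refine ⟨x, hxm, ?_⟩
        nlinarith
    have hy : ∃ y ∈ S2, (1 - θ) * sSup S2 ≤ (1 - θ) * y + ε / 2 := by
      rcases eq_or_lt_of_le hθ1 with h | h
      · exact ⟨_, hzC', by rw [h]; norm_num; linarith⟩
      · obtain ⟨y, hym, hyl⟩ :=
          exists_lt_of_lt_csSup hne2 (by linarith : sSup S2 - ε / 2 < sSup S2)
        refine ⟨y, hym, ?_⟩
        nlinarith
    obtain ⟨x, hxm, hxle⟩ := hx
    obtain ⟨y, hym, hyle⟩ := hy
    obtain ⟨p, hp, rfl⟩ := hxm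
    obtain ⟨q, hq, rfl⟩ := hym
    have hmix := McfAux.mix_mem hθ0 hθ1 hp hq
    have hTz : U (fun i k => θ * p.2 i k + (1 - θ) * q.2 i k) ∈ T := ⟨_, hmix, rfl⟩
    have hconc : θ * U p.2 + (1 - θ) * U q.2 ≤
        U (fun i k => θ * p.2 i k + (1 - θ) * q.2 i k) := by
      have heq : θ • p.2 + (1 - θ) • q.2 = fun i k => θ * p.2 i k + (1 - θ) * q.2 i k := by
        funext i k
        simp [Pi.smul_apply, smul_eq_mul]
      have := hUconc.2 (Set.mem_univ p.2) (Set.mem_univ q.2)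
        (show (0:ℝ) ≤ θ from hθ0) (show (0:ℝ) ≤ 1 - θ by linarith)
        (show θ + (1 - θ) = 1 by ring)
      rw [heq] at this
      simpa [smul_eq_mul] using this
    have hle : U (fun i k => θ * p.2 i k + (1 - θ) * q.2 i k) ≤ sSup T :=
      le_csSup hTb hTz
    linarith
  · -- unbounded case: all three are unbounded and all sups are 0
    have h1 : ¬ BddAbove S1 := McfAux.unbdd_transfer hUconc hUcont hC hTb
    have h2 : ¬ BddAbove S2 := McfAux.unbdd_transfer hUconc hUcont hC' hTb
    rw [hval, hval', hvalm, Real.sSup_of_not_bddAbove hTb,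
      Real.sSup_of_not_bddAbove h1, Real.sSup_of_not_bddAbove h2]
    simp
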